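/- Let h₁, h₂ be i.i.d. standard Gaussian, γ > 0 and R ∈ [−1,1]. Define ε(γ,R) = E[(h₁ − max(0, γRh₁ + γ√(1−R²)h₂))²]. Then ε(γ,R) = 1 + γ²/2 − γR. -/

import Mathlib

open MeasureTheory ProbabilityTheory Real Filter

namespace Stmt9Aux

lemma int_e : Integrable (fun x : ℝ => exp (-x^2/2)) := by
  have := integrable_exp_neg_mul_sq (b := (1/2 : ℝ)) (by norm_num)
  have h : ∀ x : ℝ, -(1/2 : ℝ) * x^2 = -x^2/2 := fun x => by ring
  simpa only [h] using this

lemma int_xe : Integrable (fun x : ℝ => x * exp (-x^2/2)) := by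
  have := integrable_mul_exp_neg_mul_sq (b := (1/2 : ℝ)) (by norm_num)
  have h : ∀ x : ℝ, -(1/2 : ℝ) * x^2 = -x^2/2 := fun x => by ring
  simpa only [h] using this

lemma int_abse : Integrable (fun x : ℝ => |x| * exp (-x^2/2)) := by
  have := int_xe.abs
  have h : ∀ x : ℝ, |x * exp (-x^2/2)| = |x| * exp (-x^2/2) := fun x => by
    rw [abs_mul, abs_of_pos (exp_pos _)]
  simpa only [h] using this

lemma int_x2e : Integrable (fun x : ℝ => x^2 * exp (-x^2/2)) := by
  have := integrable_rpow_mul_exp_neg_mul_sq (b := (1/2 : ℝ)) (by norm_num) (s := 2) (by norm_num)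
  have h : ∀ x : ℝ, x ^ (2:ℝ) * exp (-(1/2 : ℝ) * x^2) = x^2 * exp (-x^2/2) := fun x => by
    have h2 : x ^ (2:ℝ) = x^2 := by
      rw [show ((2:ℝ) = ((2:ℕ):ℝ)) by norm_num, Real.rpow_natCast]
    rw [h2, show -(1/2 : ℝ) * x^2 = -x^2/2 by ring]
  simpa only [h] using this

lemma tendsto_xe_atTop : Tendsto (fun x : ℝ => x * exp (-x^2/2)) atTop (nhds 0) := by
  have h := rpow_mul_exp_neg_mul_sq_isLittleO_exp_neg (b := (1/2:ℝ)) (by norm_num) 1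
  have h2 : Tendsto (fun x : ℝ => exp (-(1/2:ℝ) * x)) atTop (nhds 0) := by
    refine Real.tendsto_exp_atBot.comp ?_
    exact tendsto_id.const_mul_atTop_of_neg (by norm_num)
  have := h.tendsto_zero_of_tendsto h2
  have heq : ∀ x : ℝ, x ^ (1:ℝ) * exp (-(1/2 : ℝ) * x^2) = x * exp (-x^2/2) := fun x => by
    rw [Real.rpow_one, show -(1/2 : ℝ) * x^2 = -x^2/2 by ring]
  simpa only [heq] using this

lemma tendsto_negxe_atTop : Tendsto (fun x : ℝ => -x * exp (-x^2/2)) atTop (nhds 0) := by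
  have := tendsto_xe_atTop.neg
  have h : ∀ x : ℝ, -(x * exp (-x^2/2)) = -x * exp (-x^2/2) := fun x => by ring
  simpa only [h, neg_zero] using this

lemma tendsto_negxe_atBot : Tendsto (fun x : ℝ => -x * exp (-x^2/2)) atBot (nhds 0) := by
  have := tendsto_xe_atTop.comp tendsto_neg_atBot_atTop
  have h : ∀ x : ℝ, ((fun y : ℝ => y * exp (-y^2/2)) ∘ (fun x : ℝ => -x)) x
      = -x * exp (-x^2/2) := fun x => by
    simp only [Function.comp_apply, neg_sq]
  exact Filter.Tendsto.congr h this

lemma int_x2_sub_one : ∫ x : ℝ, (x^2 - 1) * exp (-x^2/2) = 0 := by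
  have hderiv : ∀ x : ℝ, HasDerivAt (fun x : ℝ => -x * exp (-x^2/2))
      ((x^2 - 1) * exp (-x^2/2)) x := by
    intro x
    have h1 : HasDerivAt (fun x : ℝ => -x^2/2) (-x) x := by
      exact ((hasDerivAt_pow 2 x).neg.div_const 2).congr_deriv (by push_cast; ring)
    have hexp := h1.exp
    have hneg : HasDerivAt (fun x : ℝ => -x) (-1) x := (hasDerivAt_id x).neg
    exact (hneg.mul hexp).congr_deriv (by ring)
  have hint : Integrable (fun x : ℝ => (x^2 - 1) * exp (-x^2/2)) := by
    exact (int_x2e.sub int_e).congr (Filter.Eventually.of_forall fun x => by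
      simp only [Pi.sub_apply]; ring)
  have := integral_of_hasDerivAt_of_tendsto hderiv hint tendsto_negxe_atBot tendsto_negxe_atTop
  simpa using this

lemma gauss_withDensity :
    gaussianReal 0 1
      = (volume : Measure ℝ).withDensity fun x => ((gaussianPDFReal 0 1 x).toNNReal : ENNReal) := by
  rw [gaussianReal_of_var_ne_zero _ one_ne_zero]
  rfl

lemma pdf_eq (x : ℝ) : gaussianPDFReal 0 1 x = (Real.sqrt (2*π))⁻¹ * exp (-x^2/2) := by
  rw [gaussianPDFReal_def]
  push_cast
  norm_num

lemma integrable_gauss_iff {g : ℝ → ℝ} :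
    Integrable g (gaussianReal 0 1)
      ↔ Integrable (fun x => gaussianPDFReal 0 1 x * g x) volume := by
  rw [gauss_withDensity, integrable_withDensity_iff_integrable_smul
    (measurable_gaussianPDFReal 0 1).real_toNNReal]
  have h : ∀ x, ((gaussianPDFReal 0 1 x).toNNReal • g x : ℝ) = gaussianPDFReal 0 1 x * g x :=
    fun x => by
      simp [NNReal.smul_def, Real.coe_toNNReal _ (gaussianPDFReal_nonneg 0 1 x)]
  simp_rw [h]

lemma integral_gauss (g : ℝ → ℝ) :
    ∫ x, g x ∂(gaussianReal 0 1) = ∫ x, gaussianPDFReal 0 1 x * g x := by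
  rw [gauss_withDensity, integral_withDensity_eq_integral_smul
    (measurable_gaussianPDFReal 0 1).real_toNNReal]
  congr 1 with x
  simp [NNReal.smul_def, Real.coe_toNNReal _ (gaussianPDFReal_nonneg 0 1 x)]

lemma L1 : Integrable (fun x : ℝ => x^2) (gaussianReal 0 1) := by
  rw [integrable_gauss_iff]
  have h : (fun x : ℝ => gaussianPDFReal 0 1 x * x^2)
      = fun x => (Real.sqrt (2*π))⁻¹ * (x^2 * exp (-x^2/2)) := funext fun x => by
    rw [pdf_eq]; ring
  rw [h]
  exact int_x2e.const_mul _

lemma L2 : Integrable (fun x : ℝ => x) (gaussianReal 0 1) := by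
  rw [integrable_gauss_iff]
  have h : (fun x : ℝ => gaussianPDFReal 0 1 x * x)
      = fun x => (Real.sqrt (2*π))⁻¹ * (x * exp (-x^2/2)) := funext fun x => by
    rw [pdf_eq]; ring
  rw [h]
  exact int_xe.const_mul _

lemma L3 : Integrable (fun x : ℝ => |x|) (gaussianReal 0 1) := by
  rw [integrable_gauss_iff]
  have h : (fun x : ℝ => gaussianPDFReal 0 1 x * |x|)
      = fun x => (Real.sqrt (2*π))⁻¹ * (|x| * exp (-x^2/2)) := funext fun x => by
    rw [pdf_eq]; ring
  rw [h]
  exact int_abse.const_mul _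

lemma V1 : ∫ x, x^2 ∂(gaussianReal 0 1) = 1 := by
  rw [integral_gauss (fun x => x^2)]
  have h1 : ∫ x, gaussianPDFReal 0 1 x = 1 := integral_gaussianPDFReal_eq_one 0 one_ne_zero
  have h3 : Integrable (fun x : ℝ => gaussianPDFReal 0 1 x * x^2) := by
    have := integrable_gauss_iff (g := fun x : ℝ => x^2)
    exact this.mp L1
  have h4 := integrable_gaussianPDFReal 0 1
  have h2 : ∫ x : ℝ, (gaussianPDFReal 0 1 x * x^2 - gaussianPDFReal 0 1 x) = 0 := by
    have he : (fun x : ℝ => gaussianPDFReal 0 1 x * x^2 - gaussianPDFReal 0 1 x)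
        = fun x => (Real.sqrt (2*π))⁻¹ * ((x^2 - 1) * exp (-x^2/2)) := funext fun x => by
      rw [pdf_eq]; ring
    rw [he, integral_const_mul, int_x2_sub_one, mul_zero]
  have := integral_sub h3 h4
  rw [h2, h1] at this
  linarith

/-- Generic symmetry: integral of a function odd under a measure-preserving map is zero. -/
lemma integral_eq_zero_of_odd {α : Type*} [MeasurableSpace α] {ν : Measure α} {n : α → α}
    (hn : Measurable n) (hmap : ν.map n = ν) {g : α → ℝ}
    (hg : AEStronglyMeasurable g ν) (hodd : ∀ p, g (n p) = - g p) :
    ∫ p, g p ∂ν = 0 := by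
  have hg' : AEStronglyMeasurable g (ν.map n) := by rw [hmap]; exact hg
  have h1 : ∫ p, g p ∂ν = ∫ p, g (n p) ∂ν := by
    conv_lhs => rw [← hmap]
    exact integral_map hn.aemeasurable hg'
  simp_rw [hodd] at h1
  rw [integral_neg] at h1
  linarith

lemma mapneg : (gaussianReal 0 1).map (fun x : ℝ => -x) = gaussianReal 0 1 := by
  have h := gaussianReal_map_const_mul (μ := 0) (v := 1) (-1)
  have h1 : (fun x : ℝ => -x) = ((-1 : ℝ) * ·) := funext fun x => by rw [neg_one_mul]
  have h2 : (⟨(-1:ℝ)^2, sq_nonneg _⟩ : NNReal) = 1 := by ext; norm_num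
  rw [h1]
  rw [h] ; congr 1 ; · norm_num
  norm_num

lemma V2 : ∫ x, x ∂(gaussianReal 0 1) = 0 := by
  exact integral_eq_zero_of_odd measurable_neg mapneg
    (L2.aestronglyMeasurable) (fun x => by simp)

lemma map_prod_neg_neg :
    ((gaussianReal 0 1).prod (gaussianReal 0 1)).map
        (Prod.map (fun x : ℝ => -x) (fun y : ℝ => -y))
      = (gaussianReal 0 1).prod (gaussianReal 0 1) := by
  rw [← Measure.map_prod_map _ _ measurable_neg measurable_neg, mapneg]

lemma map_prod_id_neg :
    ((gaussianReal 0 1).prod (gaussianReal 0 1)).map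
        (Prod.map (id : ℝ → ℝ) (fun y : ℝ => -y))
      = (gaussianReal 0 1).prod (gaussianReal 0 1) := by
  rw [← Measure.map_prod_map _ _ measurable_id measurable_neg, Measure.map_id, mapneg]

end Stmt9Aux

set_option maxHeartbeats 1000000 in
open Stmt9Aux in
/-- Generalization error of a ReLU student against a linear teacher:
E[(h₁ − max(0, γRh₁ + γ√(1−R²)h₂))²] = 1 + γ²/2 − γR for h₁, h₂ i.i.d. N(0,1). -/
theorem stmt9 (γ R : ℝ) (hγ : 0 < γ) (hR : R ∈ Set.Icc (-1 : ℝ) 1) :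
    ∫ p : ℝ × ℝ,
        (p.1 - max 0 (γ * R * p.1 + γ * Real.sqrt (1 - R ^ 2) * p.2)) ^ 2
        ∂((gaussianReal 0 1).prod (gaussianReal 0 1)) =
      1 + γ ^ 2 / 2 - γ * R := by
  obtain ⟨hR1, hR2⟩ := hR
  have hs2 : Real.sqrt (1 - R ^ 2) ^ 2 = 1 - R ^ 2 := Real.sq_sqrt (by nlinarith)
  set s : ℝ := Real.sqrt (1 - R ^ 2) with hsdef
  set a : ℝ := γ * R with hadef
  set b : ℝ := γ * s with hbdef
  clear_value s a b
  have key : ∀ p : ℝ × ℝ, (p.1 - max 0 (a * p.1 + b * p.2)) ^ 2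
      = ((1 - a + a ^ 2 / 2) * p.1 ^ 2 + b ^ 2 / 2 * p.2 ^ 2)
        + (-(p.1 * |a * p.1 + b * p.2|) + (a * p.1 + b * p.2) * |a * p.1 + b * p.2| / 2)
        + ((a * b - b) * (p.1 * p.2)) := by
    intro p
    rcases le_total 0 (a * p.1 + b * p.2) with h | h
    · rw [max_eq_right h, abs_of_nonneg h]; ring
    · rw [max_eq_left h, abs_of_nonpos h]; ring
  have hx2 : Integrable (fun p : ℝ × ℝ => p.1 ^ 2)
      ((gaussianReal 0 1).prod (gaussianReal 0 1)) := by
    have h : Integrable (fun p : ℝ × ℝ => p.1 ^ 2 * 1)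
        ((gaussianReal 0 1).prod (gaussianReal 0 1)) :=
      L1.mul_prod (integrable_const (1 : ℝ))
    simpa using h
  have hy2 : Integrable (fun p : ℝ × ℝ => p.2 ^ 2)
      ((gaussianReal 0 1).prod (gaussianReal 0 1)) := by
    have h : Integrable (fun p : ℝ × ℝ => 1 * p.2 ^ 2)
        ((gaussianReal 0 1).prod (gaussianReal 0 1)) :=
      (integrable_const (1 : ℝ)).mul_prod L1
    simpa using h
  have hxy : Integrable (fun p : ℝ × ℝ => p.1 * p.2)
      ((gaussianReal 0 1).prod (gaussianReal 0 1)) := L2.mul_prod L2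
  have habsxy : Integrable (fun p : ℝ × ℝ => |p.1| * |p.2|)
      ((gaussianReal 0 1).prod (gaussianReal 0 1)) := L3.mul_prod L3
  have hg0i : Integrable (fun p : ℝ × ℝ => (1 - a + a ^ 2 / 2) * p.1 ^ 2 + b ^ 2 / 2 * p.2 ^ 2)
      ((gaussianReal 0 1).prod (gaussianReal 0 1)) :=
    (hx2.const_mul _).add (hy2.const_mul _)
  have hg2i : Integrable (fun p : ℝ × ℝ => (a * b - b) * (p.1 * p.2))
      ((gaussianReal 0 1).prod (gaussianReal 0 1)) := hxy.const_mul _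
  have hg1i : Integrable (fun p : ℝ × ℝ =>
      -(p.1 * |a * p.1 + b * p.2|) + (a * p.1 + b * p.2) * |a * p.1 + b * p.2| / 2)
      ((gaussianReal 0 1).prod (gaussianReal 0 1)) := by
    refine Integrable.mono' (g := fun p : ℝ × ℝ =>
        (|a| + a ^ 2 / 2) * p.1 ^ 2 + ((1 + |a|) * |b|) * (|p.1| * |p.2|) + b ^ 2 / 2 * p.2 ^ 2)
      (((hx2.const_mul _).add (habsxy.const_mul _)).add (hy2.const_mul _)) ?_ (ae_of_all _ ?_)
    · refine Continuous.aestronglyMeasurable ?_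
      fun_prop
    · intro p
      rw [Real.norm_eq_abs]
      have ht : |a * p.1 + b * p.2| ≤ |a| * |p.1| + |b| * |p.2| :=
        (abs_add_le _ _).trans (by rw [abs_mul a p.1, abs_mul b p.2])
      have h1 : |(-(p.1 * |a * p.1 + b * p.2|)
            + (a * p.1 + b * p.2) * |a * p.1 + b * p.2| / 2)|
          ≤ |p.1| * |a * p.1 + b * p.2|
            + |a * p.1 + b * p.2| * |a * p.1 + b * p.2| / 2 := by
        refine (abs_add_le _ _).trans ?_
        rw [abs_neg, abs_mul p.1, abs_abs, abs_div, abs_mul (a * p.1 + b * p.2), abs_abs]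
        norm_num
      refine h1.trans ?_
      have h2 := abs_nonneg (a * p.1 + b * p.2)
      have h3 := abs_nonneg p.1
      have h4 := abs_nonneg p.2
      have h5 := abs_nonneg a
      have h6 := abs_nonneg b
      nlinarith [sq_abs p.1, sq_abs p.2, sq_abs a, sq_abs b,
        mul_le_mul_of_nonneg_left ht h3,
        mul_le_mul ht ht h2 (by positivity),
        mul_nonneg h3 h4]
  have hodd1 : ∫ p : ℝ × ℝ,
      (-(p.1 * |a * p.1 + b * p.2|) + (a * p.1 + b * p.2) * |a * p.1 + b * p.2| / 2)
      ∂((gaussianReal 0 1).prod (gaussianReal 0 1)) = 0 := by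
    refine integral_eq_zero_of_odd (measurable_neg.prodMap measurable_neg)
      map_prod_neg_neg hg1i.aestronglyMeasurable ?_
    intro p
    show -((-p.1) * |a * (-p.1) + b * (-p.2)|)
        + (a * (-p.1) + b * (-p.2)) * |a * (-p.1) + b * (-p.2)| / 2
      = -(-(p.1 * |a * p.1 + b * p.2|) + (a * p.1 + b * p.2) * |a * p.1 + b * p.2| / 2)
    rw [show a * (-p.1) + b * (-p.2) = -(a * p.1 + b * p.2) by ring, abs_neg]
    ring
  have hodd2 : ∫ p : ℝ × ℝ, (a * b - b) * (p.1 * p.2)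
      ∂((gaussianReal 0 1).prod (gaussianReal 0 1)) = 0 := by
    refine integral_eq_zero_of_odd (measurable_id.prodMap measurable_neg)
      map_prod_id_neg hg2i.aestronglyMeasurable ?_
    intro p
    show (a * b - b) * (p.1 * (-p.2)) = -((a * b - b) * (p.1 * p.2))
    ring
  have e1 : ∫ p : ℝ × ℝ, p.1 ^ 2 ∂((gaussianReal 0 1).prod (gaussianReal 0 1)) = 1 := by
    have h := integral_prod_mul (μ := gaussianReal 0 1) (ν := gaussianReal 0 1)
      (fun x : ℝ => x ^ 2) (fun _ : ℝ => (1 : ℝ))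
    simp only [mul_one, integral_const, measure_univ, ENNReal.toReal_one, probReal_univ, smul_eq_mul,
      one_mul] at h
    rw [h, V1]
  have e2 : ∫ p : ℝ × ℝ, p.2 ^ 2 ∂((gaussianReal 0 1).prod (gaussianReal 0 1)) = 1 := by
    have h := integral_prod_mul (μ := gaussianReal 0 1) (ν := gaussianReal 0 1)
      (fun _ : ℝ => (1 : ℝ)) (fun x : ℝ => x ^ 2)
    simp only [one_mul, integral_const, measure_univ, ENNReal.toReal_one, probReal_univ, smul_eq_mul,
      mul_one] at h
    rw [h, V1]
  have e0 : ∫ p : ℝ × ℝ, ((1 - a + a ^ 2 / 2) * p.1 ^ 2 + b ^ 2 / 2 * p.2 ^ 2)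
      ∂((gaussianReal 0 1).prod (gaussianReal 0 1)) = (1 - a + a ^ 2 / 2) + b ^ 2 / 2 := by
    rw [integral_add (hx2.const_mul _) (hy2.const_mul _), integral_const_mul, integral_const_mul,
      e1, e2, mul_one, mul_one]
  calc ∫ p : ℝ × ℝ, (p.1 - max 0 (a * p.1 + b * p.2)) ^ 2
        ∂((gaussianReal 0 1).prod (gaussianReal 0 1))
      = ∫ p : ℝ × ℝ, (((1 - a + a ^ 2 / 2) * p.1 ^ 2 + b ^ 2 / 2 * p.2 ^ 2)
          + (-(p.1 * |a * p.1 + b * p.2|) + (a * p.1 + b * p.2) * |a * p.1 + b * p.2| / 2)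
          + ((a * b - b) * (p.1 * p.2)))
        ∂((gaussianReal 0 1).prod (gaussianReal 0 1)) :=
      integral_congr_ae (ae_of_all _ fun p => key p)
    _ = ((1 - a + a ^ 2 / 2) + b ^ 2 / 2) + 0 + 0 := by
        have hg01i : Integrable (fun p : ℝ × ℝ =>
            ((1 - a + a ^ 2 / 2) * p.1 ^ 2 + b ^ 2 / 2 * p.2 ^ 2)
            + (-(p.1 * |a * p.1 + b * p.2|)
                + (a * p.1 + b * p.2) * |a * p.1 + b * p.2| / 2))
            ((gaussianReal 0 1).prod (gaussianReal 0 1)) := hg0i.add hg1i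
        rw [integral_add hg01i hg2i, integral_add hg0i hg1i, e0, hodd1, hodd2]
    _ = 1 + γ ^ 2 / 2 - a := by
        rw [hadef, hbdef]
        linear_combination (γ ^ 2 / 2) * hs2
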